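/- Let (H, λ, α) be a nondegenerate characteristic form, i.e. λ : H × H → ℤ nondegenerate symmetric bilinear on a finitely generated free abelian group and α ∈ H* with λ(x,x) ≡ α(x) mod 2 for all x ∈ H. Then the function q : T → ℚ/ℤ on T = coker(λ̂) defined by q(j(x̄)) = (λ⁻¹(x̄, x̄) + λ⁻¹(x̄, α))/2 mod ℤ is well-defined (independent of the lift x̄) and is a quadratic refinement of the torsion form b_λ, with homogeneity defect j(α). -/

import Mathlib

/-- a nondegenerate characteristic form `(H, λ, α)` induces a
well-defined quadratic refinement `q(j φ) = (λ⁻¹(φ,φ) + λ⁻¹(φ,α))/2 mod ℤ`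
of the torsion form `b_λ` on `T = coker λ̂`, with homogeneity defect `j(α)`.
(Here `λ⁻¹(φ,ψ) = ψ(x)/n` whenever `λ̂(x) = n·φ`.) -/
theorem stmt6 {H : Type*} [AddCommGroup H] [Module ℤ H]
    [Module.Free ℤ H] [Module.Finite ℤ H]
    (lam : H →ₗ[ℤ] Module.Dual ℤ H)
    (hsymm : ∀ x y : H, lam x y = lam y x)
    (hinj : Function.Injective lam)
    (hfin : Finite (Module.Dual ℤ H ⧸ LinearMap.range lam))
    (α : Module.Dual ℤ H)
    (hchar : ∀ x : H, ∃ c : ℤ, lam x x = α x + 2 * c)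
    (b : (Module.Dual ℤ H ⧸ LinearMap.range lam) →
        (Module.Dual ℤ H ⧸ LinearMap.range lam) → AddCircle (1 : ℚ))
    (hb : ∀ (φ ψ : Module.Dual ℤ H) (n : ℕ) (x : H), 0 < n → lam x = (n : ℤ) • φ →
        b (Submodule.Quotient.mk φ) (Submodule.Quotient.mk ψ) =
          (((ψ x : ℚ) / (n : ℚ) : ℚ) : AddCircle (1 : ℚ))) :
    ∃ q : (Module.Dual ℤ H ⧸ LinearMap.range lam) → AddCircle (1 : ℚ),
      (∀ (φ : Module.Dual ℤ H) (n : ℕ) (x : H), 0 < n → lam x = (n : ℤ) • φ →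
        q (Submodule.Quotient.mk φ) =
          ((((φ x : ℚ) + (α x : ℚ)) / (2 * (n : ℚ)) : ℚ) : AddCircle (1 : ℚ))) ∧
      (∀ s t, q (s + t) = q s + q t + b s t) ∧
      (∀ s, q s - q (-s) = b s (Submodule.Quotient.mk α)) := by
  classical
  -- integer casts vanish in `AddCircle (1 : ℚ)`
  have hint : ∀ k : ℤ, (((k : ℚ)) : AddCircle (1 : ℚ)) = 0 := by
    intro k
    rw [AddCircle.coe_eq_zero_iff]
    exact ⟨k, by simp⟩
  -- existence of killing data for every functional
  have exN : ∀ φ : Module.Dual ℤ H, ∃ n : ℕ, ∃ x : H,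
      0 < n ∧ lam x = (n : ℤ) • φ := by
    intro φ
    have hpos : 0 < Nat.card (Module.Dual ℤ H ⧸ LinearMap.range lam) := Nat.card_pos
    set n := Nat.card (Module.Dual ℤ H ⧸ LinearMap.range lam) with hn
    have h0 : n • (Submodule.Quotient.mk φ :
        Module.Dual ℤ H ⧸ LinearMap.range lam) = 0 := card_nsmul_eq_zero'
    have : ((n : ℤ) • φ) ∈ LinearMap.range lam := by
      rw [← Submodule.Quotient.mk_eq_zero]
      have : (Submodule.Quotient.mk ((n : ℤ) • φ) :
          Module.Dual ℤ H ⧸ LinearMap.range lam)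
          = n • Submodule.Quotient.mk φ := by
        rw [Submodule.Quotient.mk_smul, natCast_zsmul]
      rw [this, h0]
    obtain ⟨x, hx⟩ := this
    exact ⟨n, x, hpos, hx⟩
  -- key well-definedness computation
  have key : ∀ (φ φ' : Module.Dual ℤ H) (n m : ℕ) (x y : H), 0 < n → 0 < m →
      lam x = (n : ℤ) • φ → lam y = (m : ℤ) • φ' →
      (Submodule.Quotient.mk φ : Module.Dual ℤ H ⧸ LinearMap.range lam)
        = Submodule.Quotient.mk φ' →
      ((((φ x : ℚ) + (α x : ℚ)) / (2 * (n : ℚ)) : ℚ) : AddCircle (1 : ℚ)) =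
      ((((φ' y : ℚ) + (α y : ℚ)) / (2 * (m : ℚ)) : ℚ) : AddCircle (1 : ℚ)) := by
    intro φ φ' n m x y hn hm hx hy hmk
    obtain ⟨z, hz⟩ : φ' - φ ∈ LinearMap.range lam := by
      rw [Submodule.Quotient.eq] at hmk
      simpa using (LinearMap.range lam).neg_mem hmk
    obtain ⟨c, hc⟩ := hchar z
    -- n • y = m • x + (n*m) • z in H
    have hH : (n : ℤ) • y = (m : ℤ) • x + ((n : ℤ) * m) • z := by
      apply hinj
      rw [map_add, map_zsmul lam, map_zsmul lam, map_zsmul lam, hx, hy, hz]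
      module
    -- integer identity
    have hzx : lam z x = (n : ℤ) * φ z := by
      rw [← hsymm, hx]; simp [mul_comm]
    have hzz : φ' z = φ z + lam z z := by
      have := congrArg (fun f => f z) hz
      simp at this
      linarith [this]
    have e1 : (n : ℤ) * φ' y = (m : ℤ) * φ' x + (n : ℤ) * m * φ' z := by
      have := congrArg (fun w => φ' w) hH
      simpa [mul_assoc] using this
    have e2 : (n : ℤ) * α y = (m : ℤ) * α x + (n : ℤ) * m * α z := by
      have := congrArg (fun w => α w) hH
      simpa [mul_assoc] using this
    have e3 : φ' x = φ x + lam z x := by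
      have := congrArg (fun f => f x) hz
      simp at this
      linarith [this]
    have hZ : (n : ℤ) * (φ' y + α y) - (m : ℤ) * (φ x + α x)
        = 2 * n * m * (φ z + α z + c) := by
      linear_combination e1 + e2 + (m : ℤ) * e3 + (m : ℤ) * hzx
        + ((n : ℤ) * m) * hzz + ((n : ℤ) * m) * hc
    -- rational consequence
    set k : ℤ := φ z + α z + c with hk
    have hq : ((φ' y : ℚ) + (α y : ℚ)) / (2 * (m : ℚ))
        = ((φ x : ℚ) + (α x : ℚ)) / (2 * (n : ℚ)) + (k : ℚ) := by
      have hn' : (n : ℚ) ≠ 0 := by exact_mod_cast hn.ne'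
      have hm' : (m : ℚ) ≠ 0 := by exact_mod_cast hm.ne'
      have hZQ : (n : ℚ) * ((φ' y : ℚ) + (α y : ℚ)) - (m : ℚ) * ((φ x : ℚ) + (α x : ℚ))
          = 2 * (n : ℚ) * (m : ℚ) * (k : ℚ) := by exact_mod_cast hZ
      field_simp
      linear_combination hZQ
    rw [hq, QuotientAddGroup.mk_add, hint k, add_zero]
  -- choose data
  choose nf xf hnf hxf using exN
  set q : (Module.Dual ℤ H ⧸ LinearMap.range lam) → AddCircle (1 : ℚ) :=
    fun s => ((((Quotient.out s) (xf (Quotient.out s)) : ℚ)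
      + (α (xf (Quotient.out s)) : ℚ)) / (2 * (nf (Quotient.out s) : ℚ)) : ℚ) with hqdef
  have hq1 : ∀ (φ : Module.Dual ℤ H) (n : ℕ) (x : H), 0 < n → lam x = (n : ℤ) • φ →
      q (Submodule.Quotient.mk φ) =
        ((((φ x : ℚ) + (α x : ℚ)) / (2 * (n : ℚ)) : ℚ) : AddCircle (1 : ℚ)) := by
    intro φ n x hn hx
    exact key _ φ _ n _ x (hnf _) hn (hxf _) hx (Quotient.out_eq' _)
  refine ⟨q, hq1, ?_, ?_⟩
  · intro s t
    obtain ⟨φ, rfl⟩ := Submodule.Quotient.mk_surjective _ s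
    obtain ⟨ψ, rfl⟩ := Submodule.Quotient.mk_surjective _ t
    set n := nf φ; set x := xf φ
    set m := nf ψ; set y := xf ψ
    have hn : 0 < n := hnf φ
    have hm : 0 < m := hnf ψ
    have hx : lam x = (n : ℤ) • φ := hxf φ
    have hy : lam y = (m : ℤ) • ψ := hxf ψ
    have hsum : lam ((m : ℤ) • x + (n : ℤ) • y) = ((n * m : ℕ) : ℤ) • (φ + ψ) := by
      rw [map_add, map_zsmul lam, map_zsmul lam, hx, hy]
      push_cast
      module
    have hmk : (Submodule.Quotient.mk φ : Module.Dual ℤ H ⧸ LinearMap.range lam)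
        + Submodule.Quotient.mk ψ = Submodule.Quotient.mk (φ + ψ) := rfl
    rw [hmk, hq1 (φ + ψ) (n * m) _ (Nat.mul_pos hn hm) hsum,
      hq1 φ n x hn hx, hq1 ψ m y hm hy, hb φ ψ n x hn hx]
    -- key symmetry: n * φ y = m * ψ x
    have hsym2 : (n : ℤ) * φ y = (m : ℤ) * ψ x := by
      have h1 : lam x y = (n : ℤ) * φ y := by rw [hx]; simp [mul_comm]
      have h2 : lam y x = (m : ℤ) * ψ x := by rw [hy]; simp [mul_comm]
      rw [← h1, ← h2, hsymm]
    have hn' : (n : ℚ) ≠ 0 := by exact_mod_cast hn.ne'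
    have hm' : (m : ℚ) ≠ 0 := by exact_mod_cast hm.ne'
    have hval : ((((φ + ψ) ((m : ℤ) • x + (n : ℤ) • y) : ℚ)
          + (α ((m : ℤ) • x + (n : ℤ) • y) : ℚ)) / (2 * ((n * m : ℕ) : ℚ)) : ℚ)
        = (((φ x : ℚ) + (α x : ℚ)) / (2 * (n : ℚ)))
          + (((ψ y : ℚ) + (α y : ℚ)) / (2 * (m : ℚ)))
          + ((ψ x : ℚ) / (n : ℚ)) := by
      have hev : ((φ + ψ) ((m : ℤ) • x + (n : ℤ) • y) : ℤ)
          = m * φ x + n * φ y + m * ψ x + n * ψ y := by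
        simp [map_add, map_smul, smul_eq_mul]; ring
      have hev2 : (α ((m : ℤ) • x + (n : ℤ) • y) : ℤ) = m * α x + n * α y := by
        simp [map_add, map_smul, smul_eq_mul]
      rw [hev, hev2]
      have hs : ((n : ℚ)) * (φ y : ℚ) = ((m : ℚ)) * (ψ x : ℚ) := by exact_mod_cast hsym2
      push_cast
      field_simp
      linear_combination hs
    rw [hval, QuotientAddGroup.mk_add, QuotientAddGroup.mk_add]
  · intro s
    obtain ⟨φ, rfl⟩ := Submodule.Quotient.mk_surjective _ s
    set n := nf φ; set x := xf φ
    have hn : 0 < n := hnf φ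
    have hx : lam x = (n : ℤ) • φ := hxf φ
    have hneg : lam (-x) = (n : ℤ) • (-φ) := by rw [map_neg, hx]; module
    have hmk : -(Submodule.Quotient.mk φ : Module.Dual ℤ H ⧸ LinearMap.range lam)
        = Submodule.Quotient.mk (-φ) := rfl
    rw [hmk, hq1 φ n x hn hx, hq1 (-φ) n (-x) hn hneg, hb φ α n x hn hx]
    have hn' : (n : ℚ) ≠ 0 := by exact_mod_cast hn.ne'
    have hval : ((((φ x : ℚ) + (α x : ℚ)) / (2 * (n : ℚ)) : ℚ))
        - ((((-φ) (-x) : ℚ) + (α (-x) : ℚ)) / (2 * (n : ℚ)))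
        = (α x : ℚ) / (n : ℚ) := by
      have h1 : ((-φ) (-x) : ℤ) = φ x := by simp
      have h2 : (α (-x) : ℤ) = -(α x) := by simp
      rw [show (((-φ) (-x) : ℤ) : ℚ) = ((φ x : ℤ) : ℚ) by exact_mod_cast h1,
        show ((α (-x) : ℤ) : ℚ) = -((α x : ℤ) : ℚ) by exact_mod_cast h2]
      field_simp
      ring
    rw [← hval, QuotientAddGroup.mk_sub]
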